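/- For s, t ∈ Z_k with t ≠ 0 and s = t, the set Y(s,t) of nonzero vertices with coordinate sum ≡ s (mod k) and last nonzero coordinate equal to t has exactly (k^{n-1}-1)/(k-1) + 1 elements. -/

import Mathlib

/-- Two vertices of the Hamming graph `H(n,k)` are adjacent iff they differ
in exactly one coordinate. -/
def HAdj {n k : ℕ} (v w : Fin n → ZMod k) : Prop := ∃! i, v i ≠ w i

/-- `X n k s` is the set of vertices whose coordinate sum is `s` in `ZMod k`. -/
def X (n k : ℕ) (s : ZMod k) : Set (Fin n → ZMod k) := {v | ∑ i, v i = s}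

/-- `ellN v` is the (0-based) largest index at which `v` is nonzero (0 if `v = 0`). -/
def ellN {n k : ℕ} (v : Fin n → ZMod k) : ℕ :=
  (Finset.univ.filter (fun i => v i ≠ 0)).sup (fun i : Fin n => (i : ℕ))

/-- `Y n k s t` is the set of nonzero vertices with coordinate sum `s`
whose last nonzero coordinate equals `t`. -/
def Y (n k : ℕ) (s t : ZMod k) : Set (Fin n → ZMod k) :=
  {v | v ≠ 0 ∧ ∑ i, v i = s ∧ ∃ i : Fin n, (i : ℕ) = ellN v ∧ v i = t}

section aux

variable {n k : ℕ}

lemma aux_mem_Y_iff (t : ZMod k) (ht : t ≠ 0) (v : Fin n → ZMod k) :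
    v ∈ Y n k t t ↔ ∃ j : Fin n, v j = t ∧ (∀ i, j < i → v i = 0) ∧ ∑ i, v i = t := by
  constructor
  · rintro ⟨hv0, hsum, i, hi, hvi⟩
    refine ⟨i, hvi, ?_, hsum⟩
    intro i' hlt
    by_contra h
    have h1 : (i' : ℕ) ≤ ellN v :=
      Finset.le_sup (f := fun i : Fin n => (i : ℕ)) (by simp [h])
    have h2 : (i : ℕ) < (i' : ℕ) := hlt
    omega
  · rintro ⟨j, hvj, hz, hsum⟩
    have hv0 : v ≠ 0 := by
      intro h; rw [h] at hvj; exact ht hvj.symm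
    refine ⟨hv0, hsum, j, ?_, hvj⟩
    have h1 : ellN v ≤ (j : ℕ) := by
      apply Finset.sup_le
      intro i hi
      simp only [Finset.mem_filter, Finset.mem_univ, true_and] at hi
      by_contra hc
      push_neg at hc
      exact hi (hz i (Fin.lt_def.mpr hc))
    have h2 : (j : ℕ) ≤ ellN v :=
      Finset.le_sup (f := fun i : Fin n => (i : ℕ)) (by simp [hvj, ht])
    omega

lemma aux_sum_split [NeZero k] (v : Fin n → ZMod k) (j : Fin n)
    (hz : ∀ i, j < i → v i = 0) :
    ∑ i, v i = (∑ i ∈ Finset.range (j : ℕ), if h : i < n then v ⟨i, h⟩ else 0) + v j := by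
  set V : ℕ → ZMod k := fun i => if h : i < n then v ⟨i, h⟩ else 0 with hV
  have h0 : ∑ i, v i = ∑ i ∈ Finset.range n, V i := by
    rw [← Fin.sum_univ_eq_sum_range V n]
    apply Finset.sum_congr rfl
    intro i _
    simp [hV, i.isLt]
  have hjn : (j : ℕ) + 1 ≤ n := j.isLt
  have hsplit : (∑ i ∈ Finset.Ico 0 ((j : ℕ) + 1), V i) + ∑ i ∈ Finset.Ico ((j : ℕ) + 1) n, V i
      = ∑ i ∈ Finset.Ico 0 n, V i := Finset.sum_Ico_consecutive V (by omega) hjn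
  have hzero : ∑ i ∈ Finset.Ico ((j : ℕ) + 1) n, V i = 0 := by
    apply Finset.sum_eq_zero
    intro i hi
    simp only [Finset.mem_Ico] at hi
    have hin : i < n := hi.2
    have : v ⟨i, hin⟩ = 0 := hz ⟨i, hin⟩ (Fin.lt_def.mpr (by simp only [Fin.val_mk]; omega))
    simp [hV, hin, this]
  have hVj : V (j : ℕ) = v j := by simp [hV, j.isLt]
  rw [h0, ← Finset.range_eq_Ico] at *
  rw [← Finset.range_eq_Ico] at hsplit
  rw [← hsplit, hzero, add_zero, Finset.range_eq_Ico, ← Finset.sum_Ico_consecutive V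
    (Nat.zero_le _) (Nat.le_succ _), Finset.sum_Ico_succ_top (Nat.le_refl _)]
  simp [hVj]

/-- Extend a prefix vector `p` of length `j` by putting `t` at position `j` and `0` above. -/
def auxExt (t : ZMod k) (j : Fin n) (p : Fin (j : ℕ) → ZMod k) : Fin n → ZMod k :=
  fun i => if h : (i : ℕ) < (j : ℕ) then p ⟨i, h⟩ else if (i : ℕ) = (j : ℕ) then t else 0

lemma auxExt_self (t : ZMod k) (j : Fin n) (p : Fin (j : ℕ) → ZMod k) :
    auxExt t j p j = t := by
  unfold auxExt
  rw [dif_neg (lt_irrefl _), if_pos rfl]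

lemma auxExt_gt (t : ZMod k) (j : Fin n) (p : Fin (j : ℕ) → ZMod k)
    {i : Fin n} (hi : j < i) : auxExt t j p i = 0 := by
  have h := Fin.lt_def.mp hi
  unfold auxExt
  rw [dif_neg (by omega), if_neg (by omega)]

lemma auxExt_lt (t : ZMod k) (j : Fin n) (p : Fin (j : ℕ) → ZMod k)
    {i : Fin n} (h : (i : ℕ) < (j : ℕ)) : auxExt t j p i = p ⟨i, h⟩ :=
  dif_pos h

lemma aux_prefix_sum [NeZero k] (v : Fin n → ZMod k) (j : Fin n) :
    (∑ i ∈ Finset.range (j : ℕ), if h : i < n then v ⟨i, h⟩ else 0)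
      = ∑ i : Fin (j : ℕ), v (Fin.castLE j.isLt.le i) := by
  rw [← Fin.sum_univ_eq_sum_range (fun i => if h : i < n then v ⟨i, h⟩ else 0) (j : ℕ)]
  apply Finset.sum_congr rfl
  intro i _
  have hin : (i : ℕ) < n := lt_trans i.isLt j.isLt
  simp only [dif_pos hin]
  rfl

lemma aux_sum_auxExt [NeZero k] (t : ZMod k) (j : Fin n) (p : Fin (j : ℕ) → ZMod k) :
    ∑ i, auxExt t j p i = (∑ i, p i) + t := by
  rw [aux_sum_split (auxExt t j p) j (fun i hi => auxExt_gt t j p hi), auxExt_self,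
    aux_prefix_sum (auxExt t j p) j]
  congr 1
  apply Finset.sum_congr rfl
  intro i _
  rw [auxExt_lt t j p (show ((Fin.castLE j.isLt.le i : Fin n) : ℕ) < (j : ℕ) from i.isLt)]
  exact congrArg p (Fin.ext rfl)

end aux

lemma aux_card_sum_zero (k : ℕ) [NeZero k] (m : ℕ) :
    (Finset.univ.filter (fun p : Fin m → ZMod k => ∑ i, p i = 0)).card
      = if m = 0 then 1 else k ^ (m - 1) := by
  match m with
  | 0 =>
    simp only [if_pos rfl]
    rw [Finset.filter_true_of_mem (by intro p _; simp)]
    simp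
  | m + 1 =>
    simp only [Nat.succ_ne_zero, if_neg, Nat.add_sub_cancel]
    rw [← Fintype.card_subtype]
    have e : {p : Fin (m + 1) → ZMod k // ∑ i, p i = 0} ≃ (Fin m → ZMod k) :=
      { toFun := fun p => Fin.init p.1
        invFun := fun q => ⟨Fin.snoc q (-∑ i, q i), by
          rw [Fin.sum_univ_castSucc]
          simp⟩
        left_inv := by
          rintro ⟨p, hp⟩
          ext i
          have hlast : p (Fin.last m) = -∑ i : Fin m, Fin.init p i := by
            rw [Fin.sum_univ_castSucc] at hp
            have h2 : ∑ i : Fin m, Fin.init p i = ∑ i : Fin m, p i.castSucc := by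
              simp [Fin.init]
            rw [h2]
            linear_combination hp
          simp only
          rw [← hlast, Fin.snoc_init_self]
        right_inv := by
          intro q
          simp }
    rw [Fintype.card_congr e]
    simp [ZMod.card]

theorem stmt6 (n k : ℕ) (hn : 1 ≤ n) (hk : 2 ≤ k) (s t : ZMod k) (ht : t ≠ 0)
    (hst : s = t) : (Y n k s t).ncard = (k ^ (n - 1) - 1) / (k - 1) + 1 := by
  haveI : NeZero k := ⟨by omega⟩
  subst hst
  classical
  set F : Fin n → Finset (Fin n → ZMod k) :=
    fun j => Finset.univ.filter
      (fun v => v j = s ∧ (∀ i, j < i → v i = 0) ∧ ∑ i, v i = s) with hF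
  have hmemF : ∀ (j : Fin n) (v : Fin n → ZMod k),
      v ∈ F j ↔ v j = s ∧ (∀ i, j < i → v i = 0) ∧ ∑ i, v i = s := by
    intro j v
    rw [hF]
    simp only [Finset.mem_filter, Finset.mem_univ, true_and]
  have hYB : Y n k s s = ↑(Finset.univ.biUnion F) := by
    ext v
    rw [aux_mem_Y_iff s ht v]
    simp only [Finset.coe_biUnion, Finset.coe_univ, Set.mem_iUnion, Set.mem_univ,
      Finset.mem_coe, true_and]
    constructor
    · rintro ⟨j, h⟩
      exact ⟨j, trivial, (hmemF j v).mpr h⟩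
    · rintro ⟨j, -, h⟩
      exact ⟨j, (hmemF j v).mp h⟩
  rw [hYB, Set.ncard_coe_finset]
  have hdisj : ∀ x ∈ (Finset.univ : Finset (Fin n)), ∀ y ∈ Finset.univ, x ≠ y →
      Disjoint (F x) (F y) := by
    intro x _ y _ hxy
    rw [Finset.disjoint_left]
    intro v hvx hvy
    rw [hmemF] at hvx hvy
    rcases lt_or_gt_of_ne hxy with h | h
    · exact ht ((hvy.1).symm.trans (hvx.2.1 y h))
    · exact ht ((hvx.1).symm.trans (hvy.2.1 x h))
  rw [Finset.card_biUnion hdisj]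
  have hcard : ∀ j : Fin n, (F j).card = if (j : ℕ) = 0 then 1 else k ^ ((j : ℕ) - 1) := by
    intro j
    rw [← aux_card_sum_zero k (j : ℕ)]
    apply Finset.card_bij'
      (i := fun v _ => fun i : Fin (j : ℕ) => v (Fin.castLE j.isLt.le i))
      (j := fun p _ => auxExt s j p)
    · -- forward map lands in target
      intro v hv
      rw [hmemF] at hv
      obtain ⟨hvj, hz, hsum⟩ := hv
      simp only [Finset.mem_filter, Finset.mem_univ, true_and]
      have hsplit := aux_sum_split v j hz
      rw [hsplit, hvj, aux_prefix_sum v j] at hsum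
      exact add_eq_right.mp hsum
    · -- backward map lands in source
      intro p hp
      simp only [Finset.mem_filter, Finset.mem_univ, true_and] at hp
      rw [hmemF]
      refine ⟨auxExt_self s j p, fun i hi => auxExt_gt s j p hi, ?_⟩
      rw [aux_sum_auxExt, hp, zero_add]
    · -- left inverse
      intro v hv
      rw [hmemF] at hv
      obtain ⟨hvj, hz, _⟩ := hv
      funext i
      rcases lt_trichotomy (i : ℕ) (j : ℕ) with h1 | h2 | h3
      · rw [auxExt_lt _ _ _ h1]
        exact congrArg v (Fin.ext rfl)
      · rw [show i = j from Fin.ext h2, auxExt_self, hvj]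
      · rw [auxExt_gt _ _ _ (Fin.lt_def.mpr h3), hz i (Fin.lt_def.mpr h3)]
    · -- right inverse
      intro p hp
      funext i
      rw [auxExt_lt s j p (show ((Fin.castLE j.isLt.le i : Fin n) : ℕ) < (j : ℕ) from i.isLt)]
      exact congrArg p (Fin.ext rfl)
  rw [Finset.sum_congr rfl (fun j _ => hcard j)]
  rw [Fin.sum_univ_eq_sum_range (fun j => if j = 0 then 1 else k ^ (j - 1)) n]
  obtain ⟨m, rfl⟩ : ∃ m, n = m + 1 := ⟨n - 1, by omega⟩
  rw [Finset.sum_range_succ' (fun j => if j = 0 then 1 else k ^ (j - 1)) m]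
  have h1 : (∑ x ∈ Finset.range m, if x + 1 = 0 then 1 else k ^ (x + 1 - 1))
      = (k ^ m - 1) / (k - 1) := by
    rw [← Nat.geomSum_eq hk m]
    exact Finset.sum_congr rfl (fun x _ => by simp)
  rw [h1, if_pos rfl, Nat.add_sub_cancel]
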